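/- Let n ∈ ℕ and let Ω be an open, nonempty, proper subset of ℝⁿ whose boundary ∂Ω is an Ahlfors regular set; set σ := ℋ^{n−1} restricted to ∂Ω. Then for each p ∈ (0,∞) and κ ∈ (0,∞) there exists a constant C ∈ (0,∞), depending only on n, κ, p, and the Ahlfors regularity constants of ∂Ω, such that for every ε with 0 < ε < ε_{Ω,κ} := diam(∂Ω)/(n(2+√n)(3+2κ)) (interpreted as +∞ when ∂Ω is unbounded) and every Lebesgue-measurable function u : Ω → ℂ one has (∫_{O_ε} |u|^p dℒⁿ)^{1/p} ≤ C · ε^{1/p} · ‖N^ε_κ u‖_{L^p(∂Ω,σ)}. -/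

import Mathlib

open MeasureTheory Metric Set Filter
open scoped ENNReal NNReal Topology

noncomputable section

abbrev Euc (n : ℕ) : Type := EuclideanSpace ℝ (Fin n)

variable {n : ℕ}

/-- The nontangential approach region `Γ_κ(x)` to `∂Ω` from within `Ω`. -/
def ntRegion (Ω : Set (Euc n)) (κ : ℝ) (x : Euc n) : Set (Euc n) :=
  {y | y ∈ Ω ∧ dist x y < (1 + κ) * infDist y (frontier Ω)}

/-- The one-sided collar neighborhood `O_ε` of `∂Ω`. -/
def collar (Ω : Set (Euc n)) (ε : ℝ) : Set (Euc n) :=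
  {y | y ∈ Ω ∧ infDist y (frontier Ω) < ε}

/-- Nontangential maximal function of `u` restricted to a set `S` (truncated version). -/
def ntMaxOn {E : Type*} [NormedAddCommGroup E] (Ω S : Set (Euc n)) (κ : ℝ)
    (u : Euc n → E) (x : Euc n) : ℝ≥0∞ :=
  essSup (fun y => (‖u y‖₊ : ℝ≥0∞)) (volume.restrict (ntRegion Ω κ x ∩ S))

/-- Nontangential maximal function `N_κ u`. -/
def ntMax {E : Type*} [NormedAddCommGroup E] (Ω : Set (Euc n)) (κ : ℝ)
    (u : Euc n → E) (x : Euc n) : ℝ≥0∞ :=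
  essSup (fun y => (‖u y‖₊ : ℝ≥0∞)) (volume.restrict (ntRegion Ω κ x))

/-- `u` has κ-nontangential trace `v` at the boundary point `x`. -/
def HasNTTrace {E : Type*} [NormedAddCommGroup E] (Ω : Set (Euc n)) (κ : ℝ)
    (u : Euc n → E) (x : Euc n) (v : E) : Prop :=
  x ∈ closure (ntRegion Ω κ x) ∧
  ∃ N : Set (Euc n), N ⊆ ntRegion Ω κ x ∧ volume N = 0 ∧
    Tendsto u (nhdsWithin x (ntRegion Ω κ x \ N)) (nhds v)

/-- `Sig` is an Ahlfors regular set (of dimension `n-1`) with constant `C`. -/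
def AhlforsRegularWith (n : ℕ) (Sig : Set (Euc n)) (C : ℝ) : Prop :=
  1 < C ∧ IsClosed Sig ∧ ∀ x ∈ Sig, ∀ r : ℝ, 0 < r →
    ENNReal.ofReal r < 2 * EMetric.diam Sig →
    ENNReal.ofReal (C⁻¹ * r ^ (n - 1)) ≤ μH[(n : ℝ) - 1] (Sig ∩ ball x r) ∧
      μH[(n : ℝ) - 1] (Sig ∩ ball x r) ≤ ENNReal.ofReal (C * r ^ (n - 1))

/-- The measure-theoretic (geometric measure theoretic) boundary `∂*Ω`. -/
def mtBoundary (n : ℕ) (Ω : Set (Euc n)) : Set (Euc n) :=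
  {x | 0 < limsup (fun r : ℝ => volume (Ω ∩ ball x r) / ENNReal.ofReal (r ^ n)) (𝓝[>] 0) ∧
       0 < limsup (fun r : ℝ => volume (Ωᶜ ∩ ball x r) / ENNReal.ofReal (r ^ n)) (𝓝[>] 0)}

/-- The nontangentially accessible boundary `∂_nta Ω`. -/
def ntaBoundary (n : ℕ) (Ω : Set (Euc n)) : Set (Euc n) :=
  {x | x ∈ frontier Ω ∧ ∀ κ : ℝ, 0 < κ → x ∈ closure (ntRegion Ω κ x)}

/-- The Laplacian `Δu = ∑ ∂²u/∂x_j²`, via iterated Fréchet derivatives. -/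
def laplacian (u : Euc n → ℝ) (x : Euc n) : ℝ :=
  ∑ i : Fin n, fderiv ℝ (fun z => fderiv ℝ u z (EuclideanSpace.single i 1)) x
    (EuclideanSpace.single i 1)

/-- `u` is harmonic on the open set `Ω`. -/
def HarmonicOn' (u : Euc n → ℝ) (Ω : Set (Euc n)) : Prop :=
  ContDiffOn ℝ 2 u Ω ∧ ∀ x ∈ Ω, laplacian u x = 0

/-- `w` is (continuous and) subharmonic on the open set `Ω`, via the sub-mean value property. -/
def SubharmonicOn (w : Euc n → ℝ) (Ω : Set (Euc n)) : Prop :=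
  ContinuousOn w Ω ∧ ∀ x ∈ Ω, ∀ r : ℝ, 0 < r → closedBall x r ⊆ Ω →
    w x ≤ ⨍ y in ball x r, w y

/-- `Sig` is a uniformly rectifiable (UR) set: closed, Ahlfors regular, with
Big Pieces of Lipschitz Images. -/
def IsURSet (n : ℕ) (Sig : Set (Euc n)) : Prop :=
  IsClosed Sig ∧ (∃ C : ℝ, AhlforsRegularWith n Sig C) ∧
  ∃ ε : ℝ, 0 < ε ∧ ∃ M₀ : ℝ≥0, ∀ x ∈ Sig, ∀ r : ℝ, 0 < r →
    ENNReal.ofReal r < EMetric.diam Sig →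
    ∃ Φ : EuclideanSpace ℝ (Fin (n - 1)) → Euc n, LipschitzWith M₀ Φ ∧
      ENNReal.ofReal (ε * r ^ (n - 1)) ≤
        μH[(n : ℝ) - 1] (Sig ∩ ball x r ∩ Φ '' ball (0 : EuclideanSpace ℝ (Fin (n - 1))) r)

end

set_option maxHeartbeats 1000000

noncomputable section
variable {n : ℕ}

lemma ae_le_essSup_of_mem_open (f : Euc n → ℝ≥0∞) :
    ∀ᵐ y ∂(volume : Measure (Euc n)), ∀ s : Set (Euc n), IsOpen s → y ∈ s →
      f y ≤ essSup f (volume.restrict s) := by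
  obtain ⟨D, hDc, hDd⟩ := TopologicalSpace.exists_countable_dense (Euc n)
  have hball : ∀ (q : Euc n) (r : ℝ),
      ∀ᵐ y ∂(volume : Measure (Euc n)),
        y ∈ ball q r → f y ≤ essSup f (volume.restrict (ball q r)) := by
    intro q r
    have h := ae_le_essSup (f := f) (μ := (volume : Measure (Euc n)).restrict (ball q r))
    rw [ae_restrict_iff' measurableSet_ball] at h
    exact h
  have hq : ∀ᵐ y ∂(volume : Measure (Euc n)), ∀ q ∈ D, ∀ r : ℚ,
      y ∈ ball q (r : ℝ) → f y ≤ essSup f (volume.restrict (ball q (r : ℝ))) := by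
    rw [ae_ball_iff hDc]
    intro q _
    rw [ae_all_iff]
    intro r
    exact hball q r
  filter_upwards [hq] with y hy s hs hys
  obtain ⟨r, hr0, hrs⟩ := Metric.isOpen_iff.1 hs y hys
  obtain ⟨q, hqD, hqy⟩ := hDd.exists_mem_open isOpen_ball ⟨y, mem_ball_self (by linarith : (0:ℝ) < r/4)⟩
  obtain ⟨r', hr'1, hr'2⟩ := exists_rat_btwn (by linarith : r/4 < r/2)
  have hyq : y ∈ ball q (r' : ℝ) := by
    rw [mem_ball, dist_comm]
    calc dist q y < r/4 := by simpa [mem_ball] using hqy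
    _ < r' := hr'1
  have hsub : ball q (r' : ℝ) ⊆ s := by
    refine subset_trans ?_ hrs
    intro z hz
    rw [mem_ball] at hz ⊢
    have hqy' : dist q y < r/4 := by simpa [mem_ball] using hqy
    calc dist z y ≤ dist z q + dist q y := dist_triangle _ _ _
      _ < r' + r/4 := by linarith
      _ < r := by linarith
  refine (hy q hqD r' hyq).trans ?_
  exact essSup_mono_measure (Measure.absolutelyContinuous_of_le (Measure.restrict_mono hsub le_rfl))

lemma isOpen_ntRegion {Ω : Set (Euc n)} (hΩ : IsOpen Ω) (κ : ℝ) (x : Euc n) :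
    IsOpen (ntRegion Ω κ x) := by
  have : ntRegion Ω κ x = Ω ∩ {y | dist x y < (1 + κ) * infDist y (frontier Ω)} := rfl
  rw [this]
  exact hΩ.inter (isOpen_lt (Continuous.dist continuous_const continuous_id)
    (continuous_const.mul (continuous_infDist_pt _)))

lemma isOpen_collar {Ω : Set (Euc n)} (hΩ : IsOpen Ω) (ε : ℝ) : IsOpen (collar Ω ε) := by
  have : collar Ω ε = Ω ∩ {y | infDist y (frontier Ω) < ε} := rfl
  rw [this]
  exact hΩ.inter (isOpen_lt (continuous_infDist_pt _) continuous_const)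

lemma measurable_ntMaxOn {Ω S : Set (Euc n)}
    (hΩ : IsOpen Ω) (hS : IsOpen S) (κ : ℝ) {u : Euc n → ℂ} (hu : Measurable u) :
    Measurable (ntMaxOn Ω S κ u) := by
  set f : Euc n → ℝ≥0∞ := fun y => (‖u y‖₊ : ℝ≥0∞) with hf
  have hlsc : LowerSemicontinuous (ntMaxOn Ω S κ u) := by
    rw [lowerSemicontinuous_iff_isOpen_preimage]
    intro a
    rw [isOpen_iff_mem_nhds]
    rintro x (hx : a < ntMaxOn Ω S κ u x)
    have hRmeas : ∀ x' : Euc n, MeasurableSet (ntRegion Ω κ x' ∩ S) := fun x' =>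
      ((isOpen_ntRegion hΩ κ x').inter hS).measurableSet
    have hchar : ∀ x' : Euc n, volume ({y | a < f y} ∩ (ntRegion Ω κ x' ∩ S)) = 0 ↔
        ntMaxOn Ω S κ u x' ≤ a := by
      intro x'
      constructor
      · intro h0
        refine essSup_le_of_ae_le a ?_
        rw [Filter.EventuallyLE, ae_restrict_iff' (hRmeas x')]
        have h1 : ∀ᵐ y ∂(volume : Measure (Euc n)),
            y ∉ ({y | a < f y} ∩ (ntRegion Ω κ x' ∩ S)) := measure_eq_zero_iff_ae_notMem.1 h0
        filter_upwards [h1] with y hy hyR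
        by_contra hlt
        exact hy ⟨not_le.1 hlt, hyR⟩
      · intro hle
        have h1 : ∀ᵐ y ∂(volume.restrict (ntRegion Ω κ x' ∩ S)), f y ≤ a :=
          (ae_le_essSup (f := f)).mono fun y hy => hy.trans hle
        rw [ae_restrict_iff' (hRmeas x')] at h1
        rw [measure_eq_zero_iff_ae_notMem]
        filter_upwards [h1] with y hy
        rintro ⟨hlt, hyR⟩
        exact absurd (hy hyR) (not_le.2 hlt)
    have hbig : volume ({y | a < f y} ∩ (ntRegion Ω κ x ∩ S)) ≠ 0 := fun h0 =>
      absurd ((hchar x).1 h0) (not_le.2 hx)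
    set U : ℕ → Set (Euc n) := fun m =>
      {y | (y ∈ Ω ∧ dist x y + 1/((m:ℝ)+1) < (1 + κ) * infDist y (frontier Ω)) ∧ y ∈ S} with hU
    have hUnion : ({y | a < f y} ∩ (ntRegion Ω κ x ∩ S)) ⊆ ⋃ m, ({y | a < f y} ∩ U m) := by
      rintro y ⟨hyf, ⟨hyΩ, hyd⟩, hyS⟩
      obtain ⟨m, hm⟩ := exists_nat_one_div_lt
        (show (0:ℝ) < (1 + κ) * infDist y (frontier Ω) - dist x y by linarith)
      exact mem_iUnion.2 ⟨m, hyf, ⟨hyΩ, by linarith⟩, hyS⟩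
    obtain ⟨m, hm⟩ : ∃ m, volume ({y | a < f y} ∩ U m) ≠ 0 := by
      by_contra h
      push_neg at h
      refine hbig (measure_mono_null hUnion ?_)
      rw [← nonpos_iff_eq_zero]
      calc volume (⋃ m, ({y | a < f y} ∩ U m)) ≤ ∑' m, volume ({y | a < f y} ∩ U m) :=
        measure_iUnion_le _
      _ = 0 := by simp [h]
    refine Filter.mem_of_superset (Metric.ball_mem_nhds x (show (0:ℝ) < 1/((m:ℝ)+1) by positivity)) ?_
    intro x' hx'
    show a < ntMaxOn Ω S κ u x'
    by_contra hle
    push_neg at hle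
    have hsub : U m ⊆ ntRegion Ω κ x' ∩ S := by
      rintro y ⟨⟨hyΩ, hyd⟩, hyS⟩
      refine ⟨⟨hyΩ, ?_⟩, hyS⟩
      have htri : dist x' y ≤ dist x' x + dist x y := dist_triangle _ _ _
      have hxx : dist x' x < 1/((m:ℝ)+1) := mem_ball.1 hx'
      linarith
    exact hm (measure_mono_null (inter_subset_inter_right _ hsub) ((hchar x').2 hle))
  exact hlsc.measurable
end

/-- the `L^p` norm of a measurable function over the collar `O_ε` is
controlled by `ε^{1/p}` times the `L^p(∂Ω,σ)` norm of its truncated nontangential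
maximal function, uniformly for `ε < diam(∂Ω)/(n(2+√n)(3+2κ))`, with a constant
depending only on `n`, `κ`, `p` and the Ahlfors regularity constant. -/
theorem statement13 (n : ℕ) (hn : 1 ≤ n) (C₀ : ℝ) (hC₀ : 1 < C₀)
    (p κ : ℝ) (hp : 0 < p) (hκ : 0 < κ) :
    ∃ C : ℝ, 0 < C ∧
      ∀ Ω : Set (Euc n), IsOpen Ω → Ω.Nonempty → Ω ≠ univ →
        AhlforsRegularWith n (frontier Ω) C₀ →
        ∀ ε : ℝ, 0 < ε →
          ENNReal.ofReal (ε * (n * (2 + Real.sqrt n) * (3 + 2 * κ))) <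
            EMetric.diam (frontier Ω) →
          ∀ u : Euc n → ℂ, Measurable u →
            (∫⁻ y in collar Ω ε, (‖u y‖₊ : ℝ≥0∞) ^ p ∂volume) ^ (1 / p) ≤
              ENNReal.ofReal C * ENNReal.ofReal ε ^ (1 / p) *
                (∫⁻ x, (ntMaxOn Ω (collar Ω ε) κ u x) ^ p
                  ∂((μH[(n : ℝ) - 1]).restrict (frontier Ω))) ^ (1 / p) := by
  obtain ⟨m, rfl⟩ : ∃ m, n = m + 1 := ⟨n - 1, (Nat.succ_pred_eq_of_pos hn).symm⟩
  -- the fixed dimensional/geometric constants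
  set v : ℝ := (volume (ball (0 : Euc (m+1)) 1)).toReal with hv
  have hv0 : 0 ≤ v := ENNReal.toReal_nonneg
  set K : ℝ := C₀ * (2/κ) ^ m * (1 + κ/2) ^ (m+1) * 2 ^ m with hK
  have hK0 : 0 < K := by positivity
  refine ⟨max 1 ((2 * K * v) ^ (1/p)), lt_of_lt_of_le one_pos (le_max_left _ _), ?_⟩
  intro Ω hΩo hΩne hΩuniv hAR ε hε hdiam u hu
  set F : Set (Euc (m+1)) := frontier Ω with hF
  set σ : Measure (Euc (m+1)) := (μH[((m+1 : ℕ) : ℝ) - 1]).restrict F with hσ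
  set f : Euc (m+1) → ℝ≥0∞ := fun y => (‖u y‖₊ : ℝ≥0∞) with hf
  set N : Euc (m+1) → ℝ≥0∞ := ntMaxOn Ω (collar Ω ε) κ u with hN
  set d : Euc (m+1) → ℝ := fun y => infDist y F with hd
  -- basic facts
  have h1 : (0:ℝ) ≤ Real.sqrt (m+1 : ℕ) := Real.sqrt_nonneg _
  have h2 : (1:ℝ) ≤ (m+1 : ℕ) := by exact_mod_cast Nat.succ_le_succ (Nat.zero_le m)
  have hM0 : (0:ℝ) < (m+1 : ℕ) * (2 + Real.sqrt (m+1 : ℕ)) * (3 + 2*κ) :=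
    mul_pos (mul_pos (by linarith) (by linarith)) (by linarith)
  have hFne : F.Nonempty := by
    by_contra h
    rw [not_nonempty_iff_eq_empty] at h
    rw [h] at hdiam
    simp only [EMetric.diam, Metric.ediam_empty] at hdiam
    exact absurd hdiam (by simp)
  have hFclosed : IsClosed F := isClosed_frontier
  have hd_pos : ∀ y ∈ Ω, 0 < d y := by
    intro y hy
    refine (hFclosed.notMem_iff_infDist_pos hFne).1 ?_
    intro hyF
    have h3 : y ∈ closure Ω \ Ω := by rw [← hΩo.frontier_eq]; exact hyF
    exact h3.2 hy
  have hdiam' : ENNReal.ofReal (ε * ((m+1 : ℕ) * (2 + Real.sqrt (m+1 : ℕ)) * (3 + 2*κ)))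
      < EMetric.diam F := hdiam
  have hκM : κ/2 * ε ≤ ε * ((m+1 : ℕ) * (2 + Real.sqrt (m+1 : ℕ)) * (3 + 2*κ)) := by
    have e1 : (2:ℝ) ≤ ((m+1 : ℕ):ℝ) * (2 + Real.sqrt (m+1 : ℕ)) := by nlinarith
    have e2 : κ/2 ≤ ((m+1 : ℕ):ℝ) * (2 + Real.sqrt (m+1 : ℕ)) * (3 + 2*κ) := by nlinarith
    nlinarith
  -- the weight and the kernel
  set W : Euc (m+1) → ℝ≥0∞ := fun y => (ENNReal.ofReal (C₀⁻¹ * ((κ/2) * d y) ^ m))⁻¹ with hW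
  set χ : Euc (m+1) → Euc (m+1) → ℝ≥0∞ :=
    fun y x => if dist x y < (1 + κ/2) * d y then 1 else 0 with hχ
  -- σ is sigma-finite
  haveI hσfin : SigmaFinite σ := by
    obtain ⟨z₀, hz₀⟩ := hFne
    have hfin : ∀ R : ℝ, 0 < R → μH[((m+1:ℕ):ℝ) - 1] (F ∩ ball z₀ R) < ⊤ := by
      intro R hR
      rcases lt_or_ge (ENNReal.ofReal R) (2 * EMetric.diam F) with hc | hc
      · exact lt_of_le_of_lt (hAR.2.2 z₀ hz₀ R hR hc).2 ENNReal.ofReal_lt_top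
      · have hdtop : EMetric.diam F ≠ ⊤ := by
          intro h
          rw [h] at hc
          simp only [ENNReal.mul_top (by norm_num : (2:ℝ≥0∞) ≠ 0), top_le_iff] at hc
          exact ENNReal.ofReal_ne_top hc
        set D : ℝ := (EMetric.diam F).toReal with hD
        have hdiamD : EMetric.diam F = ENNReal.ofReal D := (ENNReal.ofReal_toReal hdtop).symm
        have hD0 : 0 < D :=
          ENNReal.toReal_pos (lt_of_le_of_lt zero_le hdiam').ne' hdtop
        have hsub : F ⊆ ball z₀ (3/2 * D) := by
          intro x hx
          have he : edist x z₀ ≤ EMetric.diam F := EMetric.edist_le_diam_of_mem hx hz₀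
          have hdist : dist x z₀ ≤ D := by
            rw [dist_edist]
            exact ENNReal.toReal_mono hdtop he
          rw [mem_ball]
          linarith
        have hcond : ENNReal.ofReal (3/2 * D) < 2 * EMetric.diam F := by
          rw [hdiamD, ← ENNReal.ofReal_ofNat 2, ← ENNReal.ofReal_mul (by norm_num)]
          exact (ENNReal.ofReal_lt_ofReal_iff (by positivity)).2 (by linarith)
        calc μH[((m+1:ℕ):ℝ) - 1] (F ∩ ball z₀ R)
            ≤ μH[((m+1:ℕ):ℝ) - 1] (F ∩ ball z₀ (3/2*D)) :=
              measure_mono fun x hx => ⟨hx.1, hsub hx.1⟩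
          _ ≤ ENNReal.ofReal (C₀ * (3/2*D) ^ ((m+1) - 1)) :=
              (hAR.2.2 z₀ hz₀ _ (by positivity) hcond).2
          _ < ⊤ := ENNReal.ofReal_lt_top
    refine Measure.sigmaFinite_of_countable (S := Set.range fun k : ℕ => ball z₀ ((k:ℝ)+1))
      (countable_range _) ?_ ?_
    · rintro s ⟨k, rfl⟩
      rw [hσ, Measure.restrict_apply measurableSet_ball, inter_comm]
      exact hfin ((k:ℝ)+1) (by positivity)
    · rw [sUnion_range]
      ext x
      simp only [mem_iUnion, mem_univ, iff_true]
      obtain ⟨k, hk⟩ := exists_nat_gt (dist x z₀)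
      exact ⟨k, by rw [mem_ball]; linarith⟩
  -- pointwise estimate
  have hpt : ∀ᵐ y ∂(volume : Measure (Euc (m+1))), y ∈ collar Ω ε →
      f y ^ p ≤ W y * ∫⁻ x, χ y x * N x ^ p ∂σ := by
    filter_upwards [ae_le_essSup_of_mem_open f] with y hy hyc
    obtain ⟨hyΩ, hyd⟩ := hyc
    have hd0 : 0 < d y := hd_pos y hyΩ
    obtain ⟨z, hzF, hz⟩ := hFclosed.exists_infDist_eq_dist hFne y
    set r : ℝ := κ/2 * d y with hr
    have hr0 : 0 < r := by positivity
    have hcond : ENNReal.ofReal r < 2 * EMetric.diam F := by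
      have h3 : r ≤ ε * ((m+1 : ℕ) * (2 + Real.sqrt (m+1 : ℕ)) * (3 + 2*κ)) := by
        have h4 : r ≤ κ/2 * ε := by rw [hr]; nlinarith
        linarith [hκM]
      calc ENNReal.ofReal r
          ≤ ENNReal.ofReal (ε * ((m+1 : ℕ) * (2 + Real.sqrt (m+1 : ℕ)) * (3 + 2*κ))) :=
            ENNReal.ofReal_le_ofReal h3
        _ < EMetric.diam F := hdiam'
        _ ≤ 2 * EMetric.diam F := le_mul_of_one_le_left zero_le one_le_two
    have hlow := (hAR.2.2 z hzF r hr0 hcond).1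
    have hkey : ∀ x ∈ F ∩ ball z r, f y ^ p ≤ χ y x * N x ^ p := by
      rintro x ⟨hxF, hxb⟩
      have hdyz : dist y z = d y := hz.symm
      have hdist : dist x y < (1 + κ/2) * d y := by
        have h4 : dist x z < r := mem_ball.1 hxb
        calc dist x y ≤ dist x z + dist z y := dist_triangle _ _ _
          _ < r + d y := by rw [dist_comm z y]; linarith
          _ = (1 + κ/2) * d y := by rw [hr]; ring
      have hmem : y ∈ ntRegion Ω κ x ∩ collar Ω ε := by
        refine ⟨⟨hyΩ, ?_⟩, hyΩ, hyd⟩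
        calc dist x y < (1 + κ/2) * d y := hdist
          _ < (1 + κ) * d y := by nlinarith
      have hopen : IsOpen (ntRegion Ω κ x ∩ collar Ω ε) :=
        (isOpen_ntRegion hΩo κ x).inter (isOpen_collar hΩo ε)
      have hfN : f y ≤ N x := hy _ hopen hmem
      simp only [hχ]
      rw [if_pos hdist, one_mul]
      exact ENNReal.rpow_le_rpow hfN hp.le
    have hchain : ENNReal.ofReal (C₀⁻¹ * r ^ m) * f y ^ p ≤ ∫⁻ x, χ y x * N x ^ p ∂σ := by
      calc ENNReal.ofReal (C₀⁻¹ * r ^ m) * f y ^ p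
          ≤ μH[((m+1:ℕ):ℝ) - 1] (F ∩ ball z r) * f y ^ p := mul_le_mul_left hlow _
        _ = σ (ball z r) * f y ^ p := by
            rw [hσ, Measure.restrict_apply measurableSet_ball, inter_comm]
        _ = ∫⁻ x in ball z r, f y ^ p ∂σ := by
            rw [setLIntegral_const, mul_comm]
        _ ≤ ∫⁻ x in ball z r, χ y x * N x ^ p ∂σ := by
            refine lintegral_mono_ae ?_
            have hrr : σ.restrict (ball z r) =
                (μH[((m+1:ℕ):ℝ) - 1]).restrict (ball z r ∩ F) := by
              rw [hσ, Measure.restrict_restrict measurableSet_ball]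
            have hmemb : ∀ᵐ x ∂(σ.restrict (ball z r)), x ∈ ball z r ∩ F := by
              rw [hrr]
              exact ae_restrict_mem (measurableSet_ball.inter hFclosed.measurableSet)
            filter_upwards [hmemb] with x hx using hkey x ⟨hx.2, hx.1⟩
        _ ≤ ∫⁻ x, χ y x * N x ^ p ∂σ := setLIntegral_le_lintegral _ _
    have ha0 : ENNReal.ofReal (C₀⁻¹ * r ^ m) ≠ 0 := by
      rw [ne_eq, ENNReal.ofReal_eq_zero, not_le]
      positivity
    have haT : ENNReal.ofReal (C₀⁻¹ * r ^ m) ≠ ⊤ := ENNReal.ofReal_ne_top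
    have heq3 : f y ^ p =
        (ENNReal.ofReal (C₀⁻¹ * r ^ m))⁻¹ * (ENNReal.ofReal (C₀⁻¹ * r ^ m) * f y ^ p) := by
      rw [← mul_assoc, ENNReal.inv_mul_cancel ha0 haT, one_mul]
    calc f y ^ p = _ := heq3
      _ ≤ (ENNReal.ofReal (C₀⁻¹ * r ^ m))⁻¹ * ∫⁻ x, χ y x * N x ^ p ∂σ :=
          mul_le_mul_right hchain _
      _ = W y * ∫⁻ x, χ y x * N x ^ p ∂σ := rfl
  -- collar is in the union of dyadic shells, giving the weight bound
  have hWb : ∀ x : Euc (m+1),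
      (∫⁻ y in collar Ω ε, W y * χ y x ∂volume) ≤ 2 * ENNReal.ofReal (K * v) *
        ENNReal.ofReal ε := by
    intro x
    set A : ℕ → Set (Euc (m+1)) := fun k =>
      Ω ∩ (d ⁻¹' Ico (ε * (2⁻¹:ℝ)^(k+1)) (ε * (2⁻¹:ℝ)^k)) with hA
    have hAmeas : ∀ k, MeasurableSet (A k) := fun k =>
      hΩo.measurableSet.inter ((continuous_infDist_pt F).measurable measurableSet_Ico)
    have hcover : collar Ω ε ⊆ ⋃ k, A k := by
      rintro y ⟨hyΩ, hyd⟩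
      have hd0 : 0 < d y := hd_pos y hyΩ
      have hex : ∃ k : ℕ, ε * (2⁻¹:ℝ)^k ≤ d y := by
        obtain ⟨k, hk⟩ := exists_pow_lt_of_lt_one (div_pos hd0 hε)
          (by norm_num : (2⁻¹:ℝ) < 1)
        have := (lt_div_iff₀ hε).1 hk
        exact ⟨k, by linarith⟩
      have hk₀ : ε * (2⁻¹:ℝ) ^ (Nat.find hex) ≤ d y := Nat.find_spec hex
      have hk₀pos : Nat.find hex ≠ 0 := by
        intro h
        rw [h, pow_zero, mul_one] at hk₀
        linarith
      obtain ⟨k, hkeq⟩ := Nat.exists_eq_succ_of_ne_zero hk₀pos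
      refine mem_iUnion.2 ⟨k, hyΩ, ?_, ?_⟩
      · rw [← Nat.succ_eq_add_one, ← hkeq]
        exact hk₀
      · have hmin := Nat.find_min hex (show k < Nat.find hex by omega)
        exact not_le.1 hmin
    have hterm : ∀ k : ℕ, (∫⁻ y in A k, W y * χ y x ∂volume) ≤
        ENNReal.ofReal (K * v * ε) * ENNReal.ofReal (2⁻¹:ℝ) ^ k := by
      intro k
      set ak : ℝ := C₀⁻¹ * ((κ/2) * (ε * (2⁻¹:ℝ)^(k+1))) ^ m with hak
      have hC₀0 : (0:ℝ) < C₀ := lt_trans one_pos hC₀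
      have hak0 : 0 < ak := by positivity
      set Rk : ℝ := (1 + κ/2) * (ε * (2⁻¹:ℝ)^k) with hRk
      have hRk0 : 0 < Rk := by positivity
      have hptw : ∀ᵐ y ∂(volume.restrict (A k)),
          W y * χ y x ≤ (ENNReal.ofReal ak)⁻¹ *
            (ball x Rk).indicator (fun _ => (1:ℝ≥0∞)) y := by
        filter_upwards [ae_restrict_mem (hAmeas k)] with y hy
        obtain ⟨hyΩ, hylo, hyhi⟩ := hy
        by_cases hcase : dist x y < (1 + κ/2) * d y
        · have hW_le : W y ≤ (ENNReal.ofReal ak)⁻¹ := by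
            refine ENNReal.inv_le_inv.2 (ENNReal.ofReal_le_ofReal ?_)
            refine mul_le_mul_of_nonneg_left ?_ (inv_nonneg.2 hC₀0.le)
            refine pow_le_pow_left₀ (by positivity) ?_ m
            exact mul_le_mul_of_nonneg_left hylo (by positivity)
          have hball : y ∈ ball x Rk := by
            rw [mem_ball, dist_comm]
            calc dist x y < (1 + κ/2) * d y := hcase
              _ < Rk := by
                rw [hRk]
                exact mul_lt_mul_of_pos_left hyhi (by positivity)
          simp only [hχ, if_pos hcase, mul_one, indicator_of_mem hball]
          exact hW_le
        · simp only [hχ, if_neg hcase, mul_zero]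
          exact zero_le
      have hinvT : (ENNReal.ofReal ak)⁻¹ ≠ ⊤ :=
        ENNReal.inv_ne_top.2 (ENNReal.ofReal_pos.2 hak0).ne'
      haveI : Nontrivial (Euc (m+1)) := inferInstance
      have hvol : volume (ball x Rk) =
          ENNReal.ofReal (Rk ^ (m+1)) * volume (ball (0:Euc (m+1)) 1) := by
        rw [Measure.addHaar_ball _ _ hRk0.le, finrank_euclideanSpace_fin]
      have hv1 : volume (ball (0:Euc (m+1)) 1) = ENNReal.ofReal v :=
        (ENNReal.ofReal_toReal (measure_ball_lt_top).ne).symm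
      have hreal : ak⁻¹ * (Rk ^ (m+1) * v) = (K * v * ε) * (2⁻¹:ℝ)^k := by
        set t : ℝ := (2⁻¹:ℝ)^k with ht
        have hbase : (κ/2) * (ε * (2⁻¹:ℝ)^(k+1)) = (κ/2) * (ε*t) * 2⁻¹ := by
          rw [ht, pow_succ]
          ring
        have hXm : ((κ/2) * (ε * (2⁻¹:ℝ)^(k+1)))^m = (κ/2)^m * (ε*t)^m * (2⁻¹:ℝ)^m := by
          rw [hbase, mul_pow, mul_pow]
        have hYm : Rk^(m+1) = (1+κ/2)^(m+1) * ((ε*t)^m * (ε*t)) := by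
          rw [hRk, mul_pow, pow_succ (ε*t) m]
        have hak' : ak = C₀⁻¹ * ((κ/2)^m * (ε*t)^m * (2⁻¹:ℝ)^m) := by rw [hak, hXm]
        have e3 : ((κ/2:ℝ)^m * (2⁻¹:ℝ)^m * ((2/κ)^m * (2:ℝ)^m)) = 1 := by
          rw [← mul_pow, ← mul_pow, ← mul_pow,
            show ((κ/2:ℝ) * 2⁻¹ * (2/κ * 2)) = 1 by field_simp]
          exact one_pow m
        have e4 : C₀⁻¹ * C₀ = 1 := inv_mul_cancel₀ (ne_of_gt hC₀0)
        have key : Rk^(m+1) * v = ak * ((K * v * ε) * t) := by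
          rw [hak', hYm, hK]
          calc (1+κ/2)^(m+1) * ((ε*t)^m * (ε*t)) * v
              = ((C₀⁻¹ * C₀) * ((κ/2:ℝ)^m * (2⁻¹:ℝ)^m * ((2/κ)^m * (2:ℝ)^m))) *
                ((1+κ/2)^(m+1) * (ε*t)^m * v * ε * t) := by
                rw [e3, e4]
                ring
            _ = C₀⁻¹ * ((κ/2)^m * (ε*t)^m * (2⁻¹:ℝ)^m) *
                (C₀ * (2/κ)^m * (1 + κ/2)^(m+1) * 2^m * v * ε * t) := by ring
        rw [key, ← mul_assoc, inv_mul_cancel₀ hak0.ne', one_mul]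
      calc (∫⁻ y in A k, W y * χ y x ∂volume)
          ≤ ∫⁻ y in A k, (ENNReal.ofReal ak)⁻¹ *
              (ball x Rk).indicator (fun _ => (1:ℝ≥0∞)) y ∂volume := lintegral_mono_ae hptw
        _ = (ENNReal.ofReal ak)⁻¹ *
              ∫⁻ y in A k, (ball x Rk).indicator (fun _ => (1:ℝ≥0∞)) y ∂volume :=
            lintegral_const_mul' _ _ hinvT
        _ ≤ (ENNReal.ofReal ak)⁻¹ *
              ∫⁻ y, (ball x Rk).indicator (fun _ => (1:ℝ≥0∞)) y ∂volume :=
            mul_le_mul_right (setLIntegral_le_lintegral _ _) _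
        _ = (ENNReal.ofReal ak)⁻¹ * volume (ball x Rk) := by
            rw [lintegral_indicator_const measurableSet_ball, one_mul]
        _ = ENNReal.ofReal ((K * v * ε) * (2⁻¹:ℝ)^k) := by
            rw [hvol, hv1, ← ENNReal.ofReal_inv_of_pos hak0, ← ENNReal.ofReal_mul (by positivity),
              ← ENNReal.ofReal_mul (by positivity), hreal]
        _ = ENNReal.ofReal (K * v * ε) * ENNReal.ofReal (2⁻¹:ℝ) ^ k := by
            rw [ENNReal.ofReal_mul (by positivity), ENNReal.ofReal_pow (by norm_num)]
    have hhalf : ENNReal.ofReal (2⁻¹:ℝ) = (2⁻¹ : ℝ≥0∞) := by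
      rw [ENNReal.ofReal_inv_of_pos two_pos]
      norm_num
    calc (∫⁻ y in collar Ω ε, W y * χ y x ∂volume)
        ≤ ∫⁻ y in ⋃ k, A k, W y * χ y x ∂volume := lintegral_mono_set hcover
      _ ≤ ∑' k, ∫⁻ y in A k, W y * χ y x ∂volume := lintegral_iUnion_le _ _
      _ ≤ ∑' k, ENNReal.ofReal (K * v * ε) * ENNReal.ofReal (2⁻¹:ℝ) ^ k :=
          ENNReal.tsum_le_tsum hterm
      _ = ENNReal.ofReal (K * v * ε) * ∑' k, ENNReal.ofReal (2⁻¹:ℝ) ^ k :=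
          ENNReal.tsum_mul_left
      _ = ENNReal.ofReal (K * v * ε) * 2 := by
          rw [ENNReal.tsum_geometric, hhalf, ENNReal.one_sub_inv_two, inv_inv]
      _ = 2 * ENNReal.ofReal (K * v) * ENNReal.ofReal ε := by
          rw [ENNReal.ofReal_mul (by positivity)]
          ring
  -- measurability of the kernel
  have hGmeas : AEMeasurable (Function.uncurry fun y x => W y * χ y x * N x ^ p)
      ((volume.restrict (collar Ω ε)).prod σ) := by
    have hWm : Measurable W := by
      have hc : Continuous fun y => C₀⁻¹ * ((κ/2) * d y) ^ m :=
        continuous_const.mul ((continuous_const.mul (continuous_infDist_pt F)).pow m)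
      exact (ENNReal.measurable_ofReal.comp hc.measurable).inv
    have hNm : Measurable N := measurable_ntMaxOn hΩo (isOpen_collar hΩo ε) κ hu
    have hχm : Measurable (Function.uncurry χ) := by
      have hopen : IsOpen {q : Euc (m+1) × Euc (m+1) | dist q.2 q.1 < (1 + κ/2) * d q.1} :=
        isOpen_lt (continuous_snd.dist continuous_fst)
          (continuous_const.mul ((continuous_infDist_pt F).comp continuous_fst))
      have heq : Function.uncurry χ = fun q : Euc (m+1) × Euc (m+1) =>
          Set.indicator {q : Euc (m+1) × Euc (m+1) | dist q.2 q.1 < (1 + κ/2) * d q.1}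
            (fun _ => (1:ℝ≥0∞)) q := by
        funext q
        simp only [Function.uncurry, Set.indicator_apply, hχ, mem_setOf_eq]
      rw [heq]
      exact measurable_const.indicator hopen.measurableSet
    have heq2 : Function.uncurry (fun y x => W y * χ y x * N x ^ p) =
        fun q : Euc (m+1) × Euc (m+1) => W q.1 * Function.uncurry χ q * N q.2 ^ p := rfl
    refine Measurable.aemeasurable ?_
    rw [heq2]
    exact ((hWm.comp measurable_fst).mul hχm).mul ((hNm.comp measurable_snd).pow_const p)
  -- main chain
  have main : (∫⁻ y in collar Ω ε, f y ^ p ∂volume) ≤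
      2 * ENNReal.ofReal (K * v) * ENNReal.ofReal ε * ∫⁻ x, N x ^ p ∂σ := by
    have hcm : MeasurableSet (collar Ω ε) := (isOpen_collar hΩo ε).measurableSet
    have step1 : (∫⁻ y in collar Ω ε, f y ^ p ∂volume) ≤
        ∫⁻ y in collar Ω ε, W y * ∫⁻ x, χ y x * N x ^ p ∂σ ∂volume := by
      refine lintegral_mono_ae ?_
      filter_upwards [ae_restrict_of_ae hpt, ae_restrict_mem hcm] with y h1 h2
      exact h1 h2
    have step2 : (∫⁻ y in collar Ω ε, W y * ∫⁻ x, χ y x * N x ^ p ∂σ ∂volume) =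
        ∫⁻ y in collar Ω ε, ∫⁻ x, W y * χ y x * N x ^ p ∂σ ∂volume := by
      refine lintegral_congr_ae ?_
      filter_upwards [ae_restrict_mem hcm] with y hy
      have hd0 : 0 < d y := hd_pos y hy.1
      have hWyT : W y ≠ ⊤ := by
        rw [hW]
        simp only [ne_eq, ENNReal.inv_eq_top, ENNReal.ofReal_eq_zero, not_le]
        positivity
      rw [← lintegral_const_mul' (W y) _ hWyT]
      exact lintegral_congr fun x => (mul_assoc _ _ _).symm
    have hswap := lintegral_lintegral_swap (μ := volume.restrict (collar Ω ε)) (ν := σ) hGmeas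
    have step3 : ∀ x : Euc (m+1),
        (∫⁻ y in collar Ω ε, W y * χ y x * N x ^ p ∂volume) ≤
          N x ^ p * (2 * ENNReal.ofReal (K * v) * ENNReal.ofReal ε) := by
      intro x
      have hmeasy : Measurable fun y => W y * χ y x := by
        have hWm : Measurable W := by
          have hc : Continuous fun y => C₀⁻¹ * ((κ/2) * d y) ^ m :=
            continuous_const.mul ((continuous_const.mul (continuous_infDist_pt F)).pow m)
          exact (ENNReal.measurable_ofReal.comp hc.measurable).inv
        have hopen : IsOpen {y : Euc (m+1) | dist x y < (1 + κ/2) * d y} :=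
          isOpen_lt (continuous_const.dist continuous_id)
            (continuous_const.mul (continuous_infDist_pt F))
        have hχy : Measurable fun y => χ y x := by
          have heq : (fun y => χ y x) = fun y =>
              Set.indicator {y : Euc (m+1) | dist x y < (1 + κ/2) * d y}
                (fun _ => (1:ℝ≥0∞)) y := by
            funext y
            simp only [hχ, Set.indicator_apply, mem_setOf_eq]
          rw [heq]
          exact measurable_const.indicator hopen.measurableSet
        exact hWm.mul hχy
      calc (∫⁻ y in collar Ω ε, W y * χ y x * N x ^ p ∂volume)
          = ∫⁻ y in collar Ω ε, N x ^ p * (W y * χ y x) ∂volume :=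
            lintegral_congr fun y => by ring
        _ = N x ^ p * ∫⁻ y in collar Ω ε, W y * χ y x ∂volume :=
            lintegral_const_mul _ hmeasy
        _ ≤ N x ^ p * (2 * ENNReal.ofReal (K * v) * ENNReal.ofReal ε) :=
            mul_le_mul_right (hWb x) _
    have hcT : (2 * ENNReal.ofReal (K * v) * ENNReal.ofReal ε) ≠ ⊤ := by
      exact ENNReal.mul_ne_top (ENNReal.mul_ne_top (by norm_num) ENNReal.ofReal_ne_top)
        ENNReal.ofReal_ne_top
    calc (∫⁻ y in collar Ω ε, f y ^ p ∂volume)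
        ≤ ∫⁻ y in collar Ω ε, W y * ∫⁻ x, χ y x * N x ^ p ∂σ ∂volume := step1
      _ = ∫⁻ y in collar Ω ε, ∫⁻ x, W y * χ y x * N x ^ p ∂σ ∂volume := step2
      _ = ∫⁻ x, ∫⁻ y in collar Ω ε, W y * χ y x * N x ^ p ∂volume ∂σ := hswap
      _ ≤ ∫⁻ x, N x ^ p * (2 * ENNReal.ofReal (K * v) * ENNReal.ofReal ε) ∂σ :=
          lintegral_mono step3
      _ = (∫⁻ x, N x ^ p ∂σ) * (2 * ENNReal.ofReal (K * v) * ENNReal.ofReal ε) :=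
          lintegral_mul_const' _ _ hcT
      _ = 2 * ENNReal.ofReal (K * v) * ENNReal.ofReal ε * ∫⁻ x, N x ^ p ∂σ := mul_comm _ _
  -- conclude
  have hrp : (0:ℝ) ≤ 1/p := by positivity
  have h0 := ENNReal.rpow_le_rpow main hrp
  have hconst : (2 * ENNReal.ofReal (K * v)) ^ (1/p) ≤
      ENNReal.ofReal (max 1 ((2 * K * v) ^ (1/p))) := by
    have h2 : (2 : ℝ≥0∞) * ENNReal.ofReal (K * v) = ENNReal.ofReal (2 * K * v) := by
      rw [show (2 * K * v : ℝ) = 2 * (K * v) by ring,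
        ENNReal.ofReal_mul (by norm_num : (0:ℝ) ≤ 2), ENNReal.ofReal_ofNat]
    rw [h2, ENNReal.ofReal_rpow_of_nonneg (by positivity) hrp]
    exact ENNReal.ofReal_le_ofReal (le_max_right _ _)
  calc (∫⁻ y in collar Ω ε, f y ^ p ∂volume) ^ (1/p)
      ≤ (2 * ENNReal.ofReal (K * v) * ENNReal.ofReal ε * ∫⁻ x, N x ^ p ∂σ) ^ (1/p) := h0
    _ = (2 * ENNReal.ofReal (K * v)) ^ (1/p) * ENNReal.ofReal ε ^ (1/p) *
        (∫⁻ x, N x ^ p ∂σ) ^ (1/p) := by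
        rw [ENNReal.mul_rpow_of_nonneg _ _ hrp, ENNReal.mul_rpow_of_nonneg _ _ hrp]
    _ ≤ ENNReal.ofReal (max 1 ((2 * K * v) ^ (1/p))) * ENNReal.ofReal ε ^ (1/p) *
        (∫⁻ x, N x ^ p ∂σ) ^ (1/p) :=
        mul_le_mul_left (mul_le_mul_left hconst _) _
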